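/- If S is a compact set in R^3 whose volume function satisfies V(r) = mu(S) + L_0 r + M r^2 + (4/3) pi r^3 for 0 <= r < R, then the distance D = dist(X,S) from a uniform point X on B(S,R)\setminus S has density f(r) = (L_0 + 2 M r + 4 pi r^2)/(L_0 R + M R^2 + (4/3) pi R^3) on [0,R). -/

import Mathlib

open Real MeasureTheory Metric Set Filter ENNReal Topology

lemma level_set_null (S : Set (EuclideanSpace ℝ (Fin 3)))
    (hS : IsCompact S) (hSne : S.Nonempty) {R : ℝ} (hR : 0 < R) :
    volume {x : EuclideanSpace ℝ (Fin 3) | infDist x S = R} = 0 := by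
  set A : Set (EuclideanSpace ℝ (Fin 3)) := {x | infDist x S = R} with hA
  have hAmeas : MeasurableSet A :=
    (isClosed_eq (continuous_infDist_pt S) continuous_const).measurableSet
  by_contra h
  have hres : (volume.restrict A) ≠ 0 := by
    simp only [Ne, Measure.restrict_eq_zero]
    exact h
  have : Filter.NeBot (ae (volume.restrict A)) := ae_neBot.mpr hres
  obtain ⟨x, hxtend, hxA⟩ :=
    ((Besicovitch.ae_tendsto_measure_inter_div volume A).and
      (ae_restrict_mem hAmeas)).exists
  -- nearest point
  obtain ⟨s, hsS, hds⟩ := hS.exists_infDist_eq_dist hSne x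
  have hdxs : dist x s = R := by rw [← hds]; exact hxA
  -- porosity bound
  have key : ∀ r ∈ Ioc (0:ℝ) R,
      volume (A ∩ closedBall x r) / volume (closedBall x r) ≤ 63/64 := by
    rintro r ⟨hr0, hrR⟩
    set y : EuclideanSpace ℝ (Fin 3) := x + (r/(2*R)) • (s - x) with hy
    have hnorm : ‖s - x‖ = R := by
      rw [← dist_eq_norm, dist_comm]; exact hdxs
    have hdyx : dist y x = r / 2 := by
      rw [hy, dist_eq_norm, add_sub_cancel_left, norm_smul, hnorm,
        Real.norm_eq_abs, abs_of_pos (by positivity)]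
      field_simp
    have hdys : dist y s = R - r / 2 := by
      have : y - s = (1 - r/(2*R)) • (x - s) := by
        rw [hy]; module
      rw [dist_eq_norm, this, norm_smul, Real.norm_eq_abs,
        abs_of_nonneg, ← dist_eq_norm, hdxs]
      · field_simp
      · have : r / (2*R) ≤ 1/2 := by
          rw [div_le_div_iff₀ (by positivity) (by norm_num)]
          nlinarith
        linarith
    have hsub : closedBall y (r/4) ⊆ closedBall x r := by
      intro z hz
      simp only [mem_closedBall] at hz ⊢
      calc dist z x ≤ dist z y + dist y x := dist_triangle _ _ _
        _ ≤ r/4 + r/2 := add_le_add hz hdyx.le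
        _ ≤ r := by linarith
    have hdisj : Disjoint (A ∩ closedBall x r) (closedBall y (r/4)) := by
      rw [Set.disjoint_left]
      rintro z ⟨hzA, -⟩ hzB
      have : infDist z S ≤ R - r/4 := by
        calc infDist z S ≤ dist z s := infDist_le_dist_of_mem hsS
          _ ≤ dist z y + dist y s := dist_triangle _ _ _
          _ ≤ r/4 + (R - r/2) := add_le_add hzB hdys.le
          _ = R - r/4 := by ring
      have : infDist z S < R := by linarith
      exact absurd hzA (by simp [hA]; linarith)
    set c : ℝ≥0∞ := volume (closedBall (0:EuclideanSpace ℝ (Fin 3)) 1) with hc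
    have hbig : volume (closedBall x r) = ENNReal.ofReal (r ^ 3) * c := by
      rw [Measure.addHaar_closedBall' volume x hr0.le, finrank_euclideanSpace_fin]
    have hsmall : volume (closedBall y (r/4))
        = ENNReal.ofReal (1/64) * volume (closedBall x r) := by
      rw [Measure.addHaar_closedBall' volume y (by positivity : (0:ℝ) ≤ r/4),
        finrank_euclideanSpace_fin, hbig, ← mul_assoc, ← ENNReal.ofReal_mul (by norm_num)]
      congr 2
      ring
    have hBpos : volume (closedBall x r) ≠ 0 :=
      (measure_closedBall_pos volume x hr0).ne'
    have hBfin : volume (closedBall x r) ≠ ⊤ := measure_closedBall_lt_top.ne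
    have hle : volume (A ∩ closedBall x r) + ENNReal.ofReal (1/64) * volume (closedBall x r)
        ≤ volume (closedBall x r) := by
      rw [← hsmall, ← measure_union hdisj measurableSet_closedBall]
      exact measure_mono (union_subset inter_subset_right hsub)
    have h164 : ENNReal.ofReal (1/64 : ℝ) = 1/64 := by
      rw [ENNReal.ofReal_div_of_pos (by norm_num)]
      norm_num
    have hsum : (63:ℝ≥0∞)/64 + 1/64 = 1 := by
      rw [ENNReal.div_add_div_same, show (63:ℝ≥0∞)+1 = 64 by norm_num]
      exact ENNReal.div_self (by norm_num) (by norm_num)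
    have hAle : volume (A ∩ closedBall x r) ≤ 63/64 * volume (closedBall x r) := by
      rw [h164] at hle
      calc volume (A ∩ closedBall x r)
          ≤ volume (closedBall x r) - 1/64 * volume (closedBall x r) :=
            ENNReal.le_sub_of_add_le_right (ENNReal.mul_ne_top (by norm_num) hBfin) hle
        _ = 63/64 * volume (closedBall x r) :=
            ENNReal.sub_eq_of_eq_add (ENNReal.mul_ne_top (by norm_num) hBfin)
              (by rw [← add_mul, hsum, one_mul])
    rw [ENNReal.div_le_iff hBpos hBfin]
    exact hAle
  -- contradiction with density 1
  have hev : ∀ᶠ r in 𝓝[>] (0:ℝ),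
      volume (A ∩ closedBall x r) / volume (closedBall x r) ≤ 63/64 := by
    filter_upwards [Ioc_mem_nhdsGT_of_mem ⟨le_refl (0:ℝ), hR⟩] with r hr
    exact key r hr
  have hle1 : (1:ℝ≥0∞) ≤ 63/64 := le_of_tendsto hxtend hev
  have : (63:ℝ≥0∞)/64 < 1 := by
    rw [ENNReal.div_lt_iff (by norm_num) (by norm_num)]
    norm_num
  exact absurd hle1 (not_le.mpr this)

/-- If S ⊆ ℝ³ is compact with polynomial parallel volume
V(r) = μ(S) + L₀r + Mr² + (4/3)πr³ for 0 ≤ r < R, then the distance D = dist(X,S)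
from a uniform point X on B(S,R) \ S has density
f(r) = (L₀ + 2Mr + 4πr²)/(L₀R + MR² + (4/3)πR³) on [0,R). -/
theorem stmt_9 (S : Set (EuclideanSpace ℝ (Fin 3)))
    (hS : IsCompact S) (hSne : S.Nonempty) (R L0 M : ℝ)
    (hR : 0 < R) (hL0 : 0 < L0) (hM : 0 ≤ M)
    (hvol : ∀ r : ℝ, 0 ≤ r → r < R →
      (volume (cthickening r S)).toReal
        = (volume S).toReal + L0 * r + M * r ^ 2 + 4 / 3 * π * r ^ 3)
    {Ω : Type*} [MeasurableSpace Ω] (P : Measure Ω) [IsProbabilityMeasure P]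
    (X : Ω → EuclideanSpace ℝ (Fin 3)) (hX : Measurable X)
    (hunif : Measure.map X P
      = (volume (cthickening R S \ S))⁻¹ • volume.restrict (cthickening R S \ S)) :
    ∀ r, 0 ≤ r → r < R →
      (P {ω | infDist (X ω) S ≤ r}).toReal
        = ∫ t in (0:ℝ)..r,
            (L0 + 2 * M * t + 4 * π * t ^ 2)
              / (L0 * R + M * R ^ 2 + 4 / 3 * π * R ^ 3) := by
  have hπ : 0 < π := Real.pi_pos
  set F : ℝ → ℝ := fun t => L0 * t + M * t ^ 2 + 4 / 3 * π * t ^ 3 with hF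
  have hFcont : Continuous F := by fun_prop
  have hFnonneg : ∀ t, 0 ≤ t → 0 ≤ F t := by
    intro t ht
    have : 0 ≤ 4 / 3 * π * t ^ 3 := by positivity
    have : 0 ≤ M * t ^ 2 := by positivity
    have : 0 ≤ L0 * t := by positivity
    simp only [hF]; nlinarith
  have hC : 0 < F R := by
    have h1 : 0 < L0 * R := mul_pos hL0 hR
    have h2 : 0 ≤ M * R ^ 2 := by positivity
    have h3 : 0 < 4 / 3 * π * R ^ 3 := by positivity
    simp only [hF]; nlinarith
  have hSm : MeasurableSet S := hS.isClosed.measurableSet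
  have hSfin : volume S ≠ ⊤ := hS.measure_lt_top.ne
  -- membership in cthickening
  have hmemct : ∀ (t : ℝ), 0 ≤ t → ∀ x : EuclideanSpace ℝ (Fin 3),
      (x ∈ cthickening t S ↔ infDist x S ≤ t) := by
    intro t ht x
    rw [mem_cthickening_iff, infDist]
    exact ENNReal.le_ofReal_iff_toReal_le (infEdist_ne_top hSne) ht
  -- measure of cthickening minus S
  have vol_ct : ∀ t : ℝ, 0 ≤ t → t < R →
      volume (cthickening t S \ S) = ENNReal.ofReal (F t) := by
    intro t ht htR
    have hfin : volume (cthickening t S) ≠ ⊤ := (hS.cthickening).measure_lt_top.ne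
    have hsub : S ⊆ cthickening t S := self_subset_cthickening S
    have hd : volume (cthickening t S \ S) = volume (cthickening t S) - volume S :=
      measure_diff hsub hSm.nullMeasurableSet hSfin
    have htr : (volume (cthickening t S \ S)).toReal = F t := by
      rw [hd, ENNReal.toReal_sub_of_le (measure_mono hsub) hfin, hvol t ht htR]
      simp only [hF]; ring
    rw [← htr, ENNReal.ofReal_toReal]
    rw [hd]
    exact (tsub_le_self.trans_lt hfin.lt_top).ne
  -- measure of thickening R S \ S
  set u : ℕ → ℝ := fun n => R - R / (n + 2) with hu
  have hu0 : ∀ n, 0 ≤ u n := by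
    intro n
    have : R / (n + 2) ≤ R / 1 := by
      apply div_le_div_of_nonneg_left hR.le one_pos
      exact_mod_cast by linarith [Nat.cast_nonneg (α := ℝ) n]
    simp only [hu]; simp at this ⊢; linarith
  have huR : ∀ n, u n < R := by
    intro n
    have : 0 < R / (n + 2) := by positivity
    simp only [hu]; linarith
  have humono : Monotone u := by
    intro m n hmn
    simp only [hu]
    have : R / (n + 2) ≤ R / (m + 2) := by
      apply div_le_div_of_nonneg_left hR.le (by positivity)
      exact_mod_cast by omega
    linarith
  have hulim : Filter.Tendsto u Filter.atTop (nhds R) := by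
    have h1 : Filter.Tendsto (fun n : ℕ => R / (n + 2)) Filter.atTop (nhds 0) := by
      apply Filter.Tendsto.div_atTop tendsto_const_nhds
      exact Filter.tendsto_atTop_add_const_right _ 2 tendsto_natCast_atTop_atTop
    have := (tendsto_const_nhds (x := R) (f := (Filter.atTop : Filter ℕ))).sub h1
    simpa using this
  have hUnion : (⋃ n, cthickening (u n) S \ S) = thickening R S \ S := by
    rw [← iUnion_diff]
    congr 1
    apply Set.Subset.antisymm
    · exact iUnion_subset fun n =>
        cthickening_subset_thickening' hR (huR n) S
    · intro x hx
      have hxlt : infDist x S < R := (mem_thickening_iff_infDist_lt hSne).mp hx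
      obtain ⟨n, hn⟩ := (hulim.eventually (eventually_gt_nhds hxlt)).exists
      exact mem_iUnion.mpr ⟨n, (hmemct (u n) (hu0 n) x).mpr hn.le⟩
  have vol_th : volume (thickening R S \ S) = ENNReal.ofReal (F R) := by
    have hmono : Monotone (fun n => cthickening (u n) S \ S) := by
      intro m n hmn
      exact diff_subset_diff_left (cthickening_mono (humono hmn) S)
    have h1 := tendsto_measure_iUnion_atTop (μ := volume) hmono
    rw [hUnion] at h1
    have h2 : Filter.Tendsto (fun n => volume (cthickening (u n) S \ S))
        Filter.atTop (nhds (ENNReal.ofReal (F R))) := by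
      have : (fun n => volume (cthickening (u n) S \ S))
          = fun n => ENNReal.ofReal (F (u n)) := by
        ext n; exact vol_ct (u n) (hu0 n) (huR n)
      rw [this]
      exact (ENNReal.continuous_ofReal.tendsto _).comp ((hFcont.tendsto _).comp hulim)
    exact tendsto_nhds_unique h1 h2
  -- measure of cthickening R S \ S
  have vol_D : volume (cthickening R S \ S) = ENNReal.ofReal (F R) := by
    apply le_antisymm
    · calc volume (cthickening R S \ S)
          ≤ volume ((thickening R S \ S) ∪ {x | infDist x S = R}) := by
            apply measure_mono
            rintro x ⟨hx1, hx2⟩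
            have hle : infDist x S ≤ R := (hmemct R hR.le x).mp hx1
            rcases lt_or_eq_of_le hle with h | h
            · exact Or.inl ⟨(mem_thickening_iff_infDist_lt hSne).mpr h, hx2⟩
            · exact Or.inr h
        _ ≤ volume (thickening R S \ S) + volume {x | infDist x S = R} :=
            measure_union_le _ _
        _ = ENNReal.ofReal (F R) := by
            rw [level_set_null S hS hSne hR, add_zero, vol_th]
    · rw [← vol_th]
      exact measure_mono (diff_subset_diff_left (thickening_subset_cthickening R S))
  -- main computation
  intro r hr hrR
  have hctm : MeasurableSet (cthickening r S) := isClosed_cthickening.measurableSet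
  have hset : {ω | infDist (X ω) S ≤ r} = X ⁻¹' (cthickening r S) := by
    ext ω
    simp [hmemct r hr (X ω)]
  have hP : P {ω | infDist (X ω) S ≤ r}
      = (ENNReal.ofReal (F R))⁻¹ * ENNReal.ofReal (F r) := by
    rw [hset, ← Measure.map_apply hX hctm, hunif, Measure.smul_apply, smul_eq_mul,
      Measure.restrict_apply hctm, vol_D]
    congr 1
    rw [← vol_ct r hr hrR]
    congr 1
    have : cthickening r S ∩ (cthickening R S \ S)
        = (cthickening r S ∩ cthickening R S) \ S := by
      rw [inter_diff_assoc]
    rw [this, inter_eq_self_of_subset_left (cthickening_mono hrR.le S)]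
  have hPtr : (P {ω | infDist (X ω) S ≤ r}).toReal = F r / F R := by
    rw [hP, ENNReal.toReal_mul, ENNReal.toReal_inv, ENNReal.toReal_ofReal (hFnonneg R hR.le),
      ENNReal.toReal_ofReal (hFnonneg r hr)]
    ring
  rw [hPtr]
  -- evaluate the integral
  set C : ℝ := L0 * R + M * R ^ 2 + 4 / 3 * π * R ^ 3 with hCdef
  have hCF : C = F R := rfl
  have key : ∀ t : ℝ, HasDerivAt (fun t => F t / C)
      ((L0 + 2 * M * t + 4 * π * t ^ 2) / C) t := by
    intro t
    have h1 : HasDerivAt F (L0 + 2 * M * t + 4 * π * t ^ 2) t := by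
      have := (((hasDerivAt_id t).const_mul L0).add
        ((hasDerivAt_pow 2 t).const_mul M)).add
        ((hasDerivAt_pow 3 t).const_mul (4 / 3 * π))
      convert this using 1
      · rfl
      · rfl
      · rfl
      push_cast
      ring
    exact h1.div_const C
  have hint : ∫ t in (0:ℝ)..r, (L0 + 2 * M * t + 4 * π * t ^ 2) / C
      = F r / C - F 0 / C := by
    apply intervalIntegral.integral_eq_sub_of_hasDerivAt
    · intro t _
      exact key t
    · apply Continuous.intervalIntegrable
      fun_prop
  rw [hint]
  simp only [hF]
  norm_num
  rfl
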